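/- For every integer t ≥ 1, with m = binom(4t,2) and n = 4t, the limited augmented Zarankiewicz number satisfies z_L(m,n) ≥ 2·binom(4t,2) + 4t² − 2t. -/

import Mathlib

open Finset

/-- A bipartite graph on `α × β` (a set of cells, called 1-edges) is `C₄`-free if no two
distinct rows share two distinct columns. -/
def C4Free {α β : Type*} (E1 : Finset (α × β)) : Prop :=
  ∀ i k : α, ∀ j l : β, i ≠ k → j ≠ l →
    (i, j) ∈ E1 → (i, l) ∈ E1 → (k, j) ∈ E1 → (k, l) ∈ E1 → False

/-- A 2-edge `(i,j;k,l)`: a pair of cells, its two halves `(i,j)` and `(k,l)`. -/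
abbrev TwoEdge (α β : Type*) := (α × β) × (α × β)

/-- A 2-edge `(i,j;k,l)` is nondegenerate if `i ≠ k` and `j ≠ l`. -/
def Nondeg {α β : Type*} (e : TwoEdge α β) : Prop :=
  e.1.1 ≠ e.2.1 ∧ e.1.2 ≠ e.2.2

/-- The simplicity condition: the halves of the 2-edges in `E2` are pairwise distinct
cells, none of which lies in `E1`. -/
def Simple {α β : Type*} (E1 : Finset (α × β)) (E2 : Finset (TwoEdge α β)) : Prop :=
  (∀ e ∈ E2, e.1 ≠ e.2) ∧
  (∀ e ∈ E2, e.1 ∉ E1 ∧ e.2 ∉ E1) ∧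
  (∀ e ∈ E2, ∀ f ∈ E2, e ≠ f →
    e.1 ≠ f.1 ∧ e.1 ≠ f.2 ∧ e.2 ≠ f.1 ∧ e.2 ≠ f.2)

/-- A cell is occupied if it lies in `E1` or is a half of some 2-edge in `E2`. -/
def Occupied {α β : Type*} (E1 : Finset (α × β)) (E2 : Finset (TwoEdge α β))
    (c : α × β) : Prop :=
  c ∈ E1 ∨ ∃ e ∈ E2, e.1 = c ∨ e.2 = c

/-- `(E1, E2)` contains a generalized `C₄`-cycle:
(1) a classical `C₄` among 1-edges; or
(2) a nondegenerate 2-edge `(i,j;k,l) ∈ E2` with both opposite cells `(i,l)`, `(k,j)` occupied; or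
(3) a 2-edge `(i,j;p,q) ∈ E2` and a cell `(k,l)` with `k ∉ {i,p}`, `l ∉ {j,q}` such that the
five cells `(k,l), (k,j), (k,q), (i,l), (p,l)` are all occupied, these five cells being
pairwise distinct in case the 2-edge is nondegenerate. -/
def HasGenC4 {α β : Type*} (E1 : Finset (α × β)) (E2 : Finset (TwoEdge α β)) : Prop :=
  (∃ i k : α, ∃ j l : β, i ≠ k ∧ j ≠ l ∧
      (i, j) ∈ E1 ∧ (i, l) ∈ E1 ∧ (k, j) ∈ E1 ∧ (k, l) ∈ E1) ∨
  (∃ e ∈ E2, Nondeg e ∧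
      Occupied E1 E2 (e.1.1, e.2.2) ∧ Occupied E1 E2 (e.2.1, e.1.2)) ∨
  (∃ e ∈ E2, ∃ k : α, ∃ l : β,
      k ≠ e.1.1 ∧ k ≠ e.2.1 ∧ l ≠ e.1.2 ∧ l ≠ e.2.2 ∧
      Occupied E1 E2 (k, l) ∧ Occupied E1 E2 (k, e.1.2) ∧ Occupied E1 E2 (k, e.2.2) ∧
      Occupied E1 E2 (e.1.1, l) ∧ Occupied E1 E2 (e.2.1, l) ∧
      (Nondeg e →
        [(k, l), (k, e.1.2), (k, e.2.2), (e.1.1, l), (e.2.1, l)].Pairwise (· ≠ ·)))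

/-- The Zarankiewicz number `z(m,n)`: the maximum number of cells of a `C₄`-free bipartite
graph on `[m] × [n]`. -/
noncomputable def zar (m n : ℕ) : ℕ :=
  sSup {k | ∃ E1 : Finset (Fin m × Fin n), C4Free E1 ∧ E1.card = k}

/-- An admissible limited augmented bipartite graph on `[m] × [n]`: `E1` is `C₄`-free with
`|E1| = z(m,n)`, the simplicity condition holds, and there is no generalized `C₄`-cycle. -/
def Admissible {m n : ℕ} (E1 : Finset (Fin m × Fin n))
    (E2 : Finset (TwoEdge (Fin m) (Fin n))) : Prop :=
  C4Free E1 ∧ E1.card = zar m n ∧ Simple E1 E2 ∧ ¬ HasGenC4 E1 E2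

/-- The limited augmented Zarankiewicz number `z_L(m,n)`: the maximum of `|E1| + |E2|`
over all admissible limited augmented bipartite graphs on `[m] × [n]`. -/
noncomputable def zL (m n : ℕ) : ℕ :=
  sSup {k | ∃ (E1 : Finset (Fin m × Fin n)) (E2 : Finset (TwoEdge (Fin m) (Fin n))),
    Admissible E1 E2 ∧ E1.card + E2.card = k}

lemma sub_one_le_choose_two (d : ℕ) : d - 1 ≤ d.choose 2 := by
  rw [Nat.choose_two_right]
  rcases Nat.lt_or_ge d 2 with h | h
  · interval_cases d <;> simp
  · rw [Nat.le_div_iff_mul_le (by norm_num)]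
    calc (d-1)*2 ≤ (d-1)*d := Nat.mul_le_mul_left _ h
    _ = d*(d-1) := Nat.mul_comm _ _

private def Drow {m n : ℕ} (E1 : Finset (Fin m × Fin n)) (r : Fin m) : Finset (Fin n) :=
  (E1.filter (fun p => p.1 = r)).image Prod.snd

private lemma mem_Drow {m n : ℕ} (E1 : Finset (Fin m × Fin n)) (r : Fin m) (x : Fin n) :
    x ∈ Drow E1 r ↔ (r, x) ∈ E1 := by
  simp only [Drow, mem_image, mem_filter]
  constructor
  · rintro ⟨⟨a,b⟩, ⟨hm, rfl⟩, rfl⟩; exact hm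
  · intro hm; exact ⟨(r,x), ⟨hm, rfl⟩, rfl⟩

lemma c4_upper {n : ℕ} (E1 : Finset (Fin (n.choose 2) × Fin n)) (h : C4Free E1) :
    E1.card ≤ 2 * n.choose 2 := by
  have hcard : E1.card = ∑ r, (Drow E1 r).card := by
    rw [card_eq_sum_card_fiberwise (f := Prod.fst) (t := univ) (fun x _ => mem_univ _)]
    refine Finset.sum_congr rfl (fun r _ => ?_)
    refine (Finset.card_image_of_injOn ?_).symm
    intro p hp q hq hpq
    simp only [Finset.mem_coe, Finset.mem_filter] at hp hq
    exact Prod.ext (hp.2.trans hq.2.symm) hpq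
  have hdisj : ∀ r ∈ (univ : Finset (Fin (n.choose 2))), ∀ k ∈ univ, r ≠ k →
      Disjoint (powersetCard 2 (Drow E1 r)) (powersetCard 2 (Drow E1 k)) := by
    intro r _ k _ hrk
    rw [Finset.disjoint_left]
    intro s hsr hsk
    rw [mem_powersetCard] at hsr hsk
    obtain ⟨x, y, hxy, rfl⟩ := Finset.card_eq_two.mp hsr.2
    have hx1 := (mem_Drow E1 r x).mp (hsr.1 (by simp))
    have hy1 := (mem_Drow E1 r y).mp (hsr.1 (by simp))
    have hx2 := (mem_Drow E1 k x).mp (hsk.1 (by simp))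
    have hy2 := (mem_Drow E1 k y).mp (hsk.1 (by simp))
    exact h r k x y hrk hxy hx1 hy1 hx2 hy2
  have hsumP : ∑ r, (powersetCard 2 (Drow E1 r)).card ≤ n.choose 2 := by
    rw [← Finset.card_biUnion hdisj]
    have hsub : univ.biUnion (fun r => powersetCard 2 (Drow E1 r))
        ⊆ powersetCard 2 (univ : Finset (Fin n)) := by
      intro s hs
      rw [mem_biUnion] at hs
      obtain ⟨r, _, hs⟩ := hs
      rw [mem_powersetCard] at hs ⊢
      exact ⟨subset_univ _, hs.2⟩
    calc _ ≤ _ := Finset.card_le_card hsub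
    _ = n.choose 2 := by rw [card_powersetCard, card_univ, Fintype.card_fin]
  have hPcard : ∀ r, (Drow E1 r).card - 1 ≤ (powersetCard 2 (Drow E1 r)).card := by
    intro r
    rw [card_powersetCard]
    exact sub_one_le_choose_two _
  have hsum2 : ∑ r, ((Drow E1 r).card - 1) ≤ n.choose 2 :=
    le_trans (Finset.sum_le_sum (fun r _ => hPcard r)) hsumP
  calc E1.card = ∑ r, (Drow E1 r).card := hcard
    _ ≤ ∑ r : Fin (n.choose 2), (1 + ((Drow E1 r).card - 1)) :=
        Finset.sum_le_sum (fun r _ => by omega)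
    _ = n.choose 2 + ∑ r, ((Drow E1 r).card - 1) := by
        rw [Finset.sum_add_distrib]; simp [card_univ]
    _ ≤ n.choose 2 + n.choose 2 := by omega
    _ = 2 * n.choose 2 := by omega

noncomputable section

variable {n : ℕ}

def pairsP (n : ℕ) : Finset (Finset (Fin n)) := Finset.powersetCard 2 Finset.univ

lemma card_pairsP (n : ℕ) : (pairsP n).card = n.choose 2 := by
  simp [pairsP, Finset.card_powersetCard]

def eps (n : ℕ) : Fin (n.choose 2) ≃ (pairsP n) :=
  (Finset.equivFinOfCardEq (card_pairsP n)).symm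

def S (n : ℕ) (r : Fin (n.choose 2)) : Finset (Fin n) := ((eps n) r : Finset (Fin n))

lemma S_card (r : Fin (n.choose 2)) : (S n r).card = 2 := by
  have h := ((eps n) r).2
  simp only [pairsP, Finset.mem_powersetCard] at h
  exact h.2

lemma S_nonempty (r : Fin (n.choose 2)) : (S n r).Nonempty := by
  rw [← Finset.card_pos, S_card]; norm_num

lemma S_inj {r r' : Fin (n.choose 2)} (h : S n r = S n r') : r = r' := by
  have : (eps n) r = (eps n) r' := Subtype.ext h
  exact (eps n).injective this

def E1c (n : ℕ) : Finset (Fin (n.choose 2) × Fin n) :=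
  Finset.univ.biUnion (fun r => (S n r).image (fun x => (r, x)))

lemma mem_E1c (r : Fin (n.choose 2)) (x : Fin n) : (r, x) ∈ E1c n ↔ x ∈ S n r := by
  simp only [E1c, Finset.mem_biUnion, Finset.mem_image, Finset.mem_univ, true_and]
  constructor
  · rintro ⟨r', x', hx', heq⟩
    injection heq with h1 h2
    subst h1; subst h2; exact hx'
  · intro hx; exact ⟨r, x, hx, rfl⟩

lemma mem_E1c' (p : Fin (n.choose 2) × Fin n) : p ∈ E1c n ↔ p.2 ∈ S n p.1 := mem_E1c p.1 p.2

lemma card_E1c (n : ℕ) : (E1c n).card = 2 * n.choose 2 := by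
  rw [E1c, Finset.card_biUnion]
  · have : ∀ r : Fin (n.choose 2), ((S n r).image (fun x => (r, x))).card = 2 := by
      intro r
      rw [Finset.card_image_of_injective _ (fun a b h => (Prod.mk.injEq _ _ _ _).mp h |>.2),
        S_card]
    rw [Finset.sum_congr rfl (fun r _ => this r)]
    simp [Finset.card_univ, Nat.mul_comm]
  · intro r _ k _ hrk
    rw [Function.onFun, Finset.disjoint_left]
    rintro ⟨a, b⟩ ha hb
    simp only [Finset.mem_image] at ha hb
    obtain ⟨x, _, hx⟩ := ha
    obtain ⟨y, _, hy⟩ := hb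
    have h3 := hx.trans hy.symm
    injection h3 with h1 h2
    exact hrk h1

lemma c4free_E1c (n : ℕ) : C4Free (E1c n) := by
  intro i k j l hik hjl h1 h2 h3 h4
  rw [mem_E1c] at h1 h2 h3 h4
  have hsub1 : ({j, l} : Finset (Fin n)) ⊆ S n i := by
    intro x hx; rcases Finset.mem_insert.mp hx with rfl | hx
    · exact h1
    · exact Finset.mem_singleton.mp hx ▸ h2
  have hsub2 : ({j, l} : Finset (Fin n)) ⊆ S n k := by
    intro x hx; rcases Finset.mem_insert.mp hx with rfl | hx
    · exact h3
    · exact Finset.mem_singleton.mp hx ▸ h4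
  have hc : ({j, l} : Finset (Fin n)).card = 2 := Finset.card_pair hjl
  have e1 : ({j, l} : Finset (Fin n)) = S n i :=
    Finset.eq_of_subset_of_card_le hsub1 (by rw [hc, S_card])
  have e2 : ({j, l} : Finset (Fin n)) = S n k :=
    Finset.eq_of_subset_of_card_le hsub2 (by rw [hc, S_card])
  exact hik (S_inj (e1 ▸ e2))

lemma zar_eq (n : ℕ) : zar (n.choose 2) n = 2 * n.choose 2 := by
  have hbdd : ∀ k ∈ {k | ∃ E1 : Finset (Fin (n.choose 2) × Fin n), C4Free E1 ∧ E1.card = k},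
      k ≤ 2 * n.choose 2 := by
    rintro k ⟨E1, hE1, rfl⟩
    exact c4_upper E1 hE1
  have hmem : 2 * n.choose 2 ∈
      {k | ∃ E1 : Finset (Fin (n.choose 2) × Fin n), C4Free E1 ∧ E1.card = k} :=
    ⟨E1c n, c4free_E1c n, card_E1c n⟩
  refine le_antisymm (csSup_le ⟨_, hmem⟩ hbdd) (le_csSup ⟨2 * n.choose 2, hbdd⟩ hmem)
-- Part B (to be appended after defs of Simple/Occupied/HasGenC4/Admissible/zL in final file)
namespace ZZ

lemma min'_eq_min' {α : Type*} [LinearOrder α] {s t : Finset α} (h : s = t)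
    (hs : s.Nonempty) (hts : t.Nonempty) : s.min' hs = t.min' hts := by subst h; rfl

variable (u : ℕ)

abbrev N (u : ℕ) : ℕ := 4*(u+2)
abbrev M (u : ℕ) : ℕ := (N u).choose 2

instance : NeZero (N u) := ⟨show 4*(u+2) ≠ 0 by omega⟩

def dd : Fin (N u) := ⟨2*(u+2), show 2*(u+2) < 4*(u+2) by omega⟩

lemma dd_add_dd : dd u + dd u = 0 := by
  apply Fin.ext
  rw [Fin.val_add]
  show (2*(u+2) + 2*(u+2)) % (4*(u+2)) = (0 : Fin (N u)).val
  rw [Fin.val_zero, show 2*(u+2) + 2*(u+2) = 4*(u+2) by ring, Nat.mod_self]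

def sg : Fin (N u) → Fin (N u) := fun x => x + dd u

lemma sg_sg (x : Fin (N u)) : sg u (sg u x) = x := by
  rw [sg, sg, add_assoc, dd_add_dd, add_zero]

lemma sg_inj : Function.Injective (sg u) := fun a b h => by
  rwa [sg, sg, add_left_inj] at h

lemma sg_ne (x : Fin (N u)) : sg u x ≠ x := by
  rw [sg]
  intro h
  have h0 : dd u = 0 := by rwa [add_eq_left] at h
  have := congrArg Fin.val h0
  rw [Fin.val_zero] at this
  simp [dd] at this

lemma sg_val_lt {x : Fin (N u)} (hx : 2*(u+2) ≤ x.val) : (sg u x).val < x.val := by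
  have hxlt : x.val < 4*(u+2) := x.isLt
  rw [sg, Fin.val_add]
  show (x.val + 2*(u+2)) % (4*(u+2)) < x.val
  have : (x.val + 2*(u+2)) % (4*(u+2)) = x.val + 2*(u+2) - 4*(u+2) := by
    rw [Nat.mod_eq_sub_mod (by omega), Nat.mod_eq_of_lt (by omega)]
  omega

def prt (r : Fin (M u)) : Fin (M u) :=
  (eps (N u)).symm ⟨(S (N u) r).image (sg u), by
    simp only [pairsP, Finset.mem_powersetCard]
    exact ⟨Finset.subset_univ _,
      by rw [Finset.card_image_of_injective _ (sg_inj u), S_card]⟩⟩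

lemma S_prt (r : Fin (M u)) : S (N u) (prt u r) = (S (N u) r).image (sg u) := by
  rw [prt, S, Equiv.apply_symm_apply]

lemma prt_prt (r : Fin (M u)) : prt u (prt u r) = r := by
  apply S_inj
  rw [S_prt, S_prt, Finset.image_image]
  have h : (sg u ∘ sg u) = id := funext (sg_sg u)
  rw [h, Finset.image_id]

lemma prt_inj : Function.Injective (prt u) := fun a b h => by
  rw [← prt_prt u a, h, prt_prt]

lemma prt_dichotomy (r : Fin (M u)) :
    S (N u) (prt u r) = S (N u) r ∨ Disjoint (S (N u) r) (S (N u) (prt u r)) := by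
  by_cases h : Disjoint (S (N u) r) (S (N u) (prt u r))
  · exact Or.inr h
  · left
    obtain ⟨a, ha1, ha2⟩ := Finset.not_disjoint_iff.mp h
    rw [S_prt] at ha2 ⊢
    obtain ⟨b, hb, hba⟩ := Finset.mem_image.mp ha2
    have hba' : b ≠ a := fun h' => sg_ne u b (h' ▸ hba)
    have hSr : ({b, a} : Finset (Fin (N u))) = S (N u) r := by
      refine Finset.eq_of_subset_of_card_le ?_ ?_
      · intro x hx
        rcases Finset.mem_insert.mp hx with rfl | hx
        · exact hb
        · rw [Finset.mem_singleton.mp hx]; exact ha1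
      · rw [S_card, Finset.card_pair hba']
    rw [← hSr, Finset.image_insert, Finset.image_singleton, hba]
    have h2 : sg u a = b := by rw [← hba, sg_sg]
    rw [h2]
    exact Finset.pair_comm a b

def Gd : Finset (Fin (M u)) := Finset.univ.filter (fun r =>
  S (N u) (prt u r) ≠ S (N u) r ∧
    (S (N u) r).min' (S_nonempty r) < (S (N u) (prt u r)).min' (S_nonempty _))

lemma good_ne {r : Fin (M u)} (h : r ∈ Gd u) : S (N u) (prt u r) ≠ S (N u) r :=
  ((Finset.mem_filter.mp h).2).1

lemma good_disjoint {r : Fin (M u)} (h : r ∈ Gd u) :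
    Disjoint (S (N u) r) (S (N u) (prt u r)) :=
  (prt_dichotomy u r).resolve_left (good_ne u h)

lemma good_prt_ne {r : Fin (M u)} (h : r ∈ Gd u) : prt u r ≠ r := by
  intro h'
  exact good_ne u h (congrArg (S (N u)) h')

lemma not_good_prt {r : Fin (M u)} (h : r ∈ Gd u) : prt u r ∉ Gd u := by
  intro h2
  have ha := ((Finset.mem_filter.mp h).2).2
  have hb := ((Finset.mem_filter.mp h2).2).2
  have he : (S (N u) (prt u (prt u r))).min' (S_nonempty _)
      = (S (N u) r).min' (S_nonempty _) :=
    min'_eq_min' (congrArg (S (N u)) (prt_prt u r)) _ _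
  rw [he] at hb
  exact absurd (ha.trans hb) (lt_irrefl _)

lemma good_or_prt_good {r : Fin (M u)} (h : S (N u) (prt u r) ≠ S (N u) r) :
    r ∈ Gd u ∨ prt u r ∈ Gd u := by
  have hd : Disjoint (S (N u) r) (S (N u) (prt u r)) :=
    (prt_dichotomy u r).resolve_left h
  have hne : (S (N u) r).min' (S_nonempty r) ≠ (S (N u) (prt u r)).min' (S_nonempty _) := by
    intro he
    refine Finset.disjoint_left.mp hd (Finset.min'_mem _ (S_nonempty r)) ?_
    rw [he]; exact Finset.min'_mem _ _
  rcases lt_or_gt_of_ne hne with hlt | hgt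
  · exact Or.inl (Finset.mem_filter.mpr ⟨Finset.mem_univ _, h, hlt⟩)
  · right
    refine Finset.mem_filter.mpr ⟨Finset.mem_univ _, ?_, ?_⟩
    · rw [congrArg (S (N u)) (prt_prt u r)]; exact fun h' => h h'.symm
    · calc (S (N u) (prt u r)).min' (S_nonempty _)
          < (S (N u) r).min' (S_nonempty _) := hgt
        _ = (S (N u) (prt u (prt u r))).min' (S_nonempty _) :=
          min'_eq_min' (congrArg (S (N u)) (prt_prt u r)).symm _ _

end ZZ
namespace ZZ
variable (u : ℕ)

def Dm : Finset (Fin (M u)) :=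
  Finset.univ.filter (fun r => S (N u) (prt u r) = S (N u) r)

lemma min_val_lt_of_dm {r : Fin (M u)} (h : r ∈ Dm u) :
    ((S (N u) r).min' (S_nonempty r)).val < 2*(u+2) := by
  have hd := (Finset.mem_filter.mp h).2
  set x := (S (N u) r).min' (S_nonempty r) with hx
  have hx1 : x ∈ S (N u) r := Finset.min'_mem _ _
  have hx2 : sg u x ∈ S (N u) r := by
    rw [← hd, S_prt]
    exact Finset.mem_image_of_mem _ hx1
  have hle : x ≤ sg u x := Finset.min'_le _ _ hx2
  by_contra hge
  exact absurd hle (not_le.mpr (Fin.lt_def.mpr (sg_val_lt u (by omega))))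

lemma S_eq_of_dm {r : Fin (M u)} (h : r ∈ Dm u) :
    S (N u) r = {(S (N u) r).min' (S_nonempty r), sg u ((S (N u) r).min' (S_nonempty r))} := by
  have hd := (Finset.mem_filter.mp h).2
  set x := (S (N u) r).min' (S_nonempty r) with hx
  have hx1 : x ∈ S (N u) r := Finset.min'_mem _ _
  have hx2 : sg u x ∈ S (N u) r := by
    rw [← hd, S_prt]
    exact Finset.mem_image_of_mem _ hx1
  refine (Finset.eq_of_subset_of_card_le ?_ ?_).symm
  · intro y hy
    rcases Finset.mem_insert.mp hy with rfl | hy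
    · exact hx1
    · rw [Finset.mem_singleton.mp hy]; exact hx2
  · rw [S_card, Finset.card_pair (Ne.symm (sg_ne u x))]

lemma card_Dm : (Dm u).card ≤ 2*(u+2) := by
  have : (Dm u).card ≤ (Finset.univ : Finset (Fin (2*(u+2)))).card := by
    apply Finset.card_le_card_of_injOn
      (fun r => (⟨((S (N u) r).min' (S_nonempty r)).val % (2*(u+2)),
        Nat.mod_lt _ (by omega)⟩ : Fin (2*(u+2))))
    · intro r _; exact Finset.mem_univ _
    · intro r hr r' hr' hf
      have h1 := min_val_lt_of_dm u hr
      have h2 := min_val_lt_of_dm u hr'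
      have hv : ((S (N u) r).min' (S_nonempty r)).val
          = ((S (N u) r').min' (S_nonempty r')).val := by
        have := congrArg Fin.val hf
        simpa [Nat.mod_eq_of_lt h1, Nat.mod_eq_of_lt h2] using this
      have hm : (S (N u) r).min' (S_nonempty r) = (S (N u) r').min' (S_nonempty r') :=
        Fin.ext hv
      apply S_inj
      rw [S_eq_of_dm u hr, S_eq_of_dm u hr', hm]
  simpa using this

set_option maxHeartbeats 1000000 in
lemma card_univ_split :
    (M u : ℕ) = 2 * (Gd u).card + (Dm u).card := by
  classical
  have hdisj1 : Disjoint (Gd u) ((Gd u).image (prt u)) := by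
    rw [Finset.disjoint_left]
    intro r hr hr2
    obtain ⟨g, hg, rfl⟩ := Finset.mem_image.mp hr2
    exact not_good_prt u hg hr
  have hdisj2 : Disjoint (Gd u ∪ (Gd u).image (prt u)) (Dm u) := by
    rw [Finset.disjoint_left]
    intro r hr hrd
    have hd := (Finset.mem_filter.mp hrd).2
    rcases Finset.mem_union.mp hr with hg | hg
    · exact good_ne u hg hd
    · obtain ⟨g, hg2, rfl⟩ := Finset.mem_image.mp hg
      apply good_ne u hg2
      have := congrArg (S (N u)) (prt_prt u g)
      rw [this] at hd
      exact hd.symm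
  have hcover : Gd u ∪ (Gd u).image (prt u) ∪ Dm u = Finset.univ := by
    apply Finset.eq_univ_of_forall
    intro r
    by_cases hd : S (N u) (prt u r) = S (N u) r
    · exact Finset.mem_union.mpr (Or.inr (Finset.mem_filter.mpr ⟨Finset.mem_univ _, hd⟩))
    · rcases good_or_prt_good u hd with hg | hg
      · exact Finset.mem_union.mpr (Or.inl (Finset.mem_union.mpr (Or.inl hg)))
      · refine Finset.mem_union.mpr (Or.inl (Finset.mem_union.mpr (Or.inr ?_)))
        exact Finset.mem_image.mpr ⟨prt u r, hg, prt_prt u r⟩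
  have himg : ((Gd u).image (prt u)).card = (Gd u).card :=
    Finset.card_image_of_injective _ (prt_inj u)
  have := congrArg Finset.card hcover
  rw [Finset.card_union_of_disjoint hdisj2, Finset.card_union_of_disjoint hdisj1,
    himg, Finset.card_univ, Fintype.card_fin] at this
  omega

lemma choose_val : M u = 2*(u+2)*(4*(u+2)-1) := by
  show (4*(u+2)).choose 2 = _
  rw [Nat.choose_two_right]
  have h : 4*(u+2)*(4*(u+2)-1) = 2*(2*(u+2)*(4*(u+2)-1)) := by
    generalize (4*(u+2)-1) = w
    ring
  rw [h, Nat.mul_div_cancel_left _ (by norm_num)]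

lemma card_Gd_ge : 4*(u+2)^2 - 2*(u+2) ≤ (Gd u).card := by
  have h1 := card_univ_split u
  have h2 := card_Dm u
  have h3 := choose_val u
  have hsq : (u+2)^2 = (u+2)*(u+2) := sq (u+2)
  have h4 : 2*(u+2)*(4*(u+2)-1) + 2*(u+2) = 8*((u+2)*(u+2)) := by
    have : 1 ≤ 4*(u+2) := by omega
    zify [this]
    ring
  omega

def colf (r : Fin (M u)) : Fin (N u) :=
  ((S (N u) r ∪ S (N u) (prt u r))ᶜ).min' (by
    rw [← Finset.card_pos, Finset.card_compl]
    have h1 : (S (N u) r ∪ S (N u) (prt u r)).card ≤ 4 :=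
      le_trans (Finset.card_union_le _ _) (by rw [S_card, S_card])
    have h2 : Fintype.card (Fin (N u)) = 4*(u+2) := Fintype.card_fin _
    omega)

lemma colf_not_mem_left (r : Fin (M u)) : colf u r ∉ S (N u) r := by
  have h' : colf u r ∈ (S (N u) r ∪ S (N u) (prt u r))ᶜ := Finset.min'_mem _ _
  rw [Finset.mem_compl] at h'
  exact fun hm => h' (Finset.mem_union.mpr (Or.inl hm))

lemma colf_not_mem_right (r : Fin (M u)) : colf u r ∉ S (N u) (prt u r) := by
  have h' : colf u r ∈ (S (N u) r ∪ S (N u) (prt u r))ᶜ := Finset.min'_mem _ _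
  rw [Finset.mem_compl] at h'
  exact fun hm => h' (Finset.mem_union.mpr (Or.inr hm))

end ZZ

namespace ZZ
variable (u : ℕ)

def E2c : Finset (TwoEdge (Fin (M u)) (Fin (N u))) :=
  (Gd u).image (fun r => ((r, colf u r), (prt u r, colf u r)))

lemma card_E2c : (E2c u).card = (Gd u).card := by
  rw [E2c, Finset.card_image_of_injOn]
  intro r _ r' _ h
  exact congrArg (fun e : TwoEdge (Fin (M u)) (Fin (N u)) => e.1.1) h

lemma occ_char {r : Fin (M u)} {x : Fin (N u)}
    (h : Occupied (E1c (N u)) (E2c u) (r, x)) :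
    x ∈ S (N u) r ∨ (r ∈ Gd u ∧ x = colf u r) ∨
      (prt u r ∈ Gd u ∧ x = colf u (prt u r)) := by
  rcases h with h | ⟨e, he, hh⟩
  · exact Or.inl ((mem_E1c _ _).mp h)
  · obtain ⟨g, hg, rfl⟩ := Finset.mem_image.mp he
    rcases hh with h1 | h2
    · injection h1 with ha hb
      subst ha
      exact Or.inr (Or.inl ⟨hg, hb.symm⟩)
    · injection h2 with ha hb
      subst ha
      refine Or.inr (Or.inr ?_)
      rw [prt_prt u g]
      exact ⟨hg, hb.symm⟩

lemma simple_E2c : Simple (E1c (N u)) (E2c u) := by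
  refine ⟨?_, ?_, ?_⟩
  · rintro e he
    obtain ⟨g, hg, rfl⟩ := Finset.mem_image.mp he
    intro h
    injection h with h1 _
    exact good_prt_ne u hg h1.symm
  · rintro e he
    obtain ⟨g, hg, rfl⟩ := Finset.mem_image.mp he
    constructor
    · rw [mem_E1c']
      exact colf_not_mem_left u g
    · rw [mem_E1c']
      exact colf_not_mem_right u g
  · rintro e he f hf hef
    obtain ⟨g, hg, rfl⟩ := Finset.mem_image.mp he
    obtain ⟨g', hg', rfl⟩ := Finset.mem_image.mp hf
    have hgg' : g ≠ g' := fun h => hef (by rw [h])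
    refine ⟨?_, ?_, ?_, ?_⟩
    · intro h; injection h with h1 _; exact hgg' h1
    · intro h
      injection h with h1 _
      apply not_good_prt u hg'
      rw [← h1]; exact hg
    · intro h
      injection h with h1 _
      apply not_good_prt u hg
      rw [h1]; exact hg'
    · intro h
      injection h with h1 _
      exact hgg' (prt_inj u h1)

lemma no_gen : ¬ HasGenC4 (E1c (N u)) (E2c u) := by
  rintro (⟨i, k, j, l, hik, hjl, h1, h2, h3, h4⟩ | ⟨e, he, hnd, _⟩ |
    ⟨e, he, k, l, _, _, hl1, _, _, _, _, hil, hpl, _⟩)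
  · exact c4free_E1c _ i k j l hik hjl h1 h2 h3 h4
  · obtain ⟨g, hg, rfl⟩ := Finset.mem_image.mp he
    exact hnd.2 rfl
  · obtain ⟨g, hg, rfl⟩ := Finset.mem_image.mp he
    have H1 := occ_char u hil
    have H2 := occ_char u hpl
    have hl1' : l ≠ colf u g := hl1
    have hLg : l ∈ S (N u) g := by
      rcases H1 with h | ⟨_, h⟩ | ⟨hpg, _⟩
      · exact h
      · exact absurd h hl1'
      · exact absurd hpg (not_good_prt u hg)
    have hLpg : l ∈ S (N u) (prt u g) := by
      rcases H2 with h | ⟨hpg, _⟩ | ⟨hg2, hcol⟩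
      · exact h
      · exact absurd hpg (not_good_prt u hg)
      · rw [prt_prt] at hcol
        exact absurd hcol hl1'
    exact Finset.disjoint_left.mp (good_disjoint u hg) hLg hLpg

end ZZ

lemma le_zL {m n : ℕ} (E1 : Finset (Fin m × Fin n)) (E2 : Finset (TwoEdge (Fin m) (Fin n)))
    (h : Admissible E1 E2) : E1.card + E2.card ≤ zL m n := by
  apply le_csSup
  · refine ⟨Fintype.card (Fin m × Fin n) + Fintype.card (TwoEdge (Fin m) (Fin n)), ?_⟩
    rintro k ⟨E1', E2', _, rfl⟩
    have h1 : E1'.card ≤ Fintype.card (Fin m × Fin n) := by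
      rw [← Finset.card_univ]; exact Finset.card_le_univ _
    have h2 : E2'.card ≤ Fintype.card (TwoEdge (Fin m) (Fin n)) := by
      rw [← Finset.card_univ]; exact Finset.card_le_univ _
    omega
  · exact ⟨E1, E2, h, rfl⟩

def E1one : Finset (Fin 6 × Fin 4) :=
  {(0,0),(0,1),(1,0),(1,2),(2,0),(2,3),(3,1),(3,2),(4,1),(4,3),(5,2),(5,3)}

def E2one : Finset (TwoEdge (Fin 6) (Fin 4)) := {((0,2),(3,3)), ((1,3),(2,1))}

instance decC4Free {m n : ℕ} (E1 : Finset (Fin m × Fin n)) : Decidable (C4Free E1) := by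
  unfold C4Free; infer_instance

instance decNondeg {m n : ℕ} (e : TwoEdge (Fin m) (Fin n)) : Decidable (Nondeg e) := by
  unfold Nondeg; infer_instance

instance decSimple {m n : ℕ} (E1 : Finset (Fin m × Fin n))
    (E2 : Finset (TwoEdge (Fin m) (Fin n))) : Decidable (Simple E1 E2) := by
  unfold Simple
  refine @instDecidableAnd _ _ ?_ (@instDecidableAnd _ _ ?_ ?_) <;> infer_instance

instance decOccupied {m n : ℕ} (E1 : Finset (Fin m × Fin n))
    (E2 : Finset (TwoEdge (Fin m) (Fin n))) (c : Fin m × Fin n) :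
    Decidable (Occupied E1 E2 c) := by
  unfold Occupied; infer_instance

instance decHasGenC4 {m n : ℕ} (E1 : Finset (Fin m × Fin n))
    (E2 : Finset (TwoEdge (Fin m) (Fin n))) : Decidable (HasGenC4 E1 E2) := by
  unfold HasGenC4
  refine @instDecidableOr _ _ ?_ (@instDecidableOr _ _ ?_ ?_) <;> infer_instance

set_option maxRecDepth 100000 in
set_option maxHeartbeats 1000000 in
/-- For every integer `t ≥ 1`, with `m = binom(4t,2)` and `n = 4t`,
`z_L(m,n) ≥ 2·binom(4t,2) + 4t² − 2t`. -/
theorem zL_K4t_quadratic (t : ℕ) (ht : 1 ≤ t) :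
    2 * Nat.choose (4 * t) 2 + (4 * t ^ 2 - 2 * t) ≤ zL (Nat.choose (4 * t) 2) (4 * t) := by
  rcases eq_or_lt_of_le ht with h1 | h2
  · -- t = 1
    subst h1
    have hc : Nat.choose (4 * 1) 2 = 6 := by decide
    rw [hc]
    have hzar : zar 6 4 = 12 := by
      have h0 := zar_eq 4
      have h6 : Nat.choose 4 2 = 6 := by decide
      rw [h6] at h0
      simpa using h0
    have hadm : Admissible E1one E2one := by
      refine ⟨by decide, ?_, by decide, by decide⟩
      rw [hzar]; decide
    have h := le_zL E1one E2one hadm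
    have hc1 : E1one.card = 12 := by decide
    have hc2 : E2one.card = 2 := by decide
    rw [hc1, hc2] at h
    calc 2 * 6 + (4 * 1 ^ 2 - 2 * 1) = 14 := by norm_num
    _ ≤ zL 6 4 := h
  · -- t ≥ 2
    obtain ⟨u, rfl⟩ : ∃ u, t = u + 2 := ⟨t - 2, by omega⟩
    have hadm : Admissible (E1c (ZZ.N u)) (ZZ.E2c u) :=
      ⟨c4free_E1c _, (card_E1c _).trans (zar_eq _).symm, ZZ.simple_E2c u, ZZ.no_gen u⟩
    have h := le_zL _ _ hadm
    rw [card_E1c, ZZ.card_E2c] at h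
    have hG := ZZ.card_Gd_ge u
    calc 2 * Nat.choose (4 * (u+2)) 2 + (4 * (u+2) ^ 2 - 2 * (u+2))
        ≤ 2 * Nat.choose (4 * (u+2)) 2 + (ZZ.Gd u).card := by omega
    _ ≤ zL (Nat.choose (4 * (u+2)) 2) (4 * (u+2)) := h
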